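/- For every integer ℓ ≥ 4, β₂(ℓ) ≥ 1 - 1/(2ℓ), while for ℓ = 2 and ℓ = 3, β₂(ℓ) ≤ 1 - 1/(2ℓ). -/

import Mathlib

/-- The digamma function `ψ(x) = Γ'(x)/Γ(x)`. -/
noncomputable def digamma (x : ℝ) : ℝ := deriv Real.Gamma x / Real.Gamma x

/-- `g₂(x) = 3/2 - γ - ψ(x+1) - 2x(ψ(2x) - ψ(x))`. -/
noncomputable def g2 (x : ℝ) : ℝ :=
  3 / 2 - Real.eulerMascheroniConstant - digamma (x + 1)
    - 2 * x * (digamma (2 * x) - digamma x)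

/-- `g₃(x) = 2 - γ - ψ(x+1) + (x/2)(5-3x)ψ(x) - x(1-6x)ψ(2x) - (3x/2)(1+3x)ψ(3x)`. -/
noncomputable def g3 (x : ℝ) : ℝ :=
  2 - Real.eulerMascheroniConstant - digamma (x + 1)
    + x / 2 * (5 - 3 * x) * digamma x
    - x * (1 - 6 * x) * digamma (2 * x)
    - 3 * x / 2 * (1 + 3 * x) * digamma (3 * x)

/-- `β₁(ℓ) = (1/ℓ)(-γ - ψ(1/ℓ))`. -/
noncomputable def beta1 (l : ℝ) : ℝ :=
  1 / l * (-Real.eulerMascheroniConstant - digamma (1 / l))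

/-- `β₂(ℓ) = (1/ℓ)[1 - γ - (1 - 2/ℓ)ψ(1/ℓ) - (2/ℓ)ψ(2/ℓ)]`. -/
noncomputable def beta2 (l : ℝ) : ℝ :=
  1 / l * (1 - Real.eulerMascheroniConstant - (1 - 2 / l) * digamma (1 / l)
    - 2 / l * digamma (2 / l))

/-- `β₃(ℓ) = (1/ℓ)[3/2 - γ - (1 - 3/(2ℓ))(1 - 1/ℓ)ψ(1/ℓ) - (1/ℓ)(1 - 6/ℓ)ψ(2/ℓ)
  - (3/(2ℓ))(1 + 3/ℓ)ψ(3/ℓ)]`. -/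
noncomputable def beta3 (l : ℝ) : ℝ :=
  1 / l * (3 / 2 - Real.eulerMascheroniConstant
    - (1 - 3 / (2 * l)) * (1 - 1 / l) * digamma (1 / l)
    - 1 / l * (1 - 6 / l) * digamma (2 / l)
    - 3 / (2 * l) * (1 + 3 / l) * digamma (3 / l))

open Real Filter Topology Finset Set

local notation "γ" => Real.eulerMascheroniConstant

section DigammaAux

lemma gamma_hasDerivAt' {x : ℝ} (hx : 0 < x) :
    HasDerivAt Real.Gamma (deriv Real.Gamma x) x :=
  (Real.differentiableAt_Gamma fun m ↦ ((neg_nonpos.mpr m.cast_nonneg).trans_lt hx).ne').hasDerivAt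

lemma digamma_one' : digamma 1 = -γ := by
  rw [digamma, Real.hasDerivAt_Gamma_one.deriv, Real.Gamma_one, div_one]

lemma digamma_add_one' {x : ℝ} (hx : 0 < x) : digamma (x + 1) = digamma x + 1 / x := by
  have hx1 : (0:ℝ) < x + 1 := by linarith
  have hG := gamma_hasDerivAt' hx
  have h1 : HasDerivAt (fun y : ℝ => Real.Gamma (y + 1)) (deriv Real.Gamma (x + 1)) x := by
    simpa [Function.comp_def] using (gamma_hasDerivAt' hx1).comp x ((hasDerivAt_id x).add_const 1)
  have h2 : HasDerivAt (fun y : ℝ => y * Real.Gamma y)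
      (1 * Real.Gamma x + x * deriv Real.Gamma x) x := (hasDerivAt_id x).mul hG
  have heq : (fun y : ℝ => y * Real.Gamma y) =ᶠ[𝓝 x] fun y : ℝ => Real.Gamma (y + 1) := by
    filter_upwards [eventually_gt_nhds hx] with y hy
    rw [Real.Gamma_add_one hy.ne']
  have key : deriv Real.Gamma (x + 1) = Real.Gamma x + x * deriv Real.Gamma x := by
    have := (h1.congr_of_eventuallyEq heq).unique h2
    linarith
  have hΓ : Real.Gamma x ≠ 0 := (Real.Gamma_pos_of_pos hx).ne'
  rw [digamma, digamma, key, Real.Gamma_add_one hx.ne']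
  field_simp
  ring

lemma digamma_eq_deriv_log' {x : ℝ} (hx : 0 < x) :
    deriv (Real.log ∘ Real.Gamma) x = digamma x :=
  ((gamma_hasDerivAt' hx).log (Real.Gamma_pos_of_pos hx).ne').deriv

lemma digamma_monotoneOn' : MonotoneOn digamma (Ioi (0:ℝ)) := by
  have hm := Real.convexOn_log_Gamma.monotoneOn_deriv (fun x hx =>
    ((gamma_hasDerivAt' hx).log (Real.Gamma_pos_of_pos hx).ne').differentiableAt)
  intro x hx y hy hxy
  rw [← digamma_eq_deriv_log' hx, ← digamma_eq_deriv_log' hy]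
  exact hm hx hy hxy

lemma digamma_add_nat' {x : ℝ} (hx : 0 < x) (N : ℕ) :
    digamma (x + N) = digamma x + ∑ k ∈ Finset.range N, 1 / (x + k) := by
  induction N with
  | zero => simp
  | succ n ih =>
    have hxn : (0:ℝ) < x + n := by positivity
    have e1 : (x + ((n:ℕ)+1:ℕ) : ℝ) = (x + n) + 1 := by push_cast; ring
    rw [e1, digamma_add_one' hxn, ih, Finset.sum_range_succ]
    push_cast
    ring

lemma digamma_diff_tendsto' {x : ℝ} (hx : 0 < x) (hx1 : x ≤ 1) :
    Tendsto (fun N : ℕ => digamma (x + N) - digamma (1 + N)) atTop (𝓝 0) := by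
  have hlow : Tendsto (fun N : ℕ => -(1 / (N:ℝ))) atTop (𝓝 0) := by
    simpa using (tendsto_one_div_atTop_nhds_zero_nat (𝕜 := ℝ)).neg
  refine tendsto_of_tendsto_of_tendsto_of_le_of_le' hlow tendsto_const_nhds ?_ ?_
  · filter_upwards [eventually_ge_atTop 1] with N hN
    have hN0 : (0:ℝ) < N := by exact_mod_cast hN
    have h1 : digamma (1 + N) = digamma N + 1 / N := by
      rw [add_comm]; exact digamma_add_one' hN0
    have h2 : digamma (N:ℝ) ≤ digamma (x + N) :=
      digamma_monotoneOn' (mem_Ioi.mpr hN0) (mem_Ioi.mpr (by linarith)) (by linarith)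
    rw [h1]; linarith
  · filter_upwards [eventually_ge_atTop 1] with N hN
    have hN0 : (0:ℝ) < N := by exact_mod_cast hN
    have h2 : digamma (x + N) ≤ digamma (1 + N) :=
      digamma_monotoneOn' (mem_Ioi.mpr (by linarith)) (mem_Ioi.mpr (by linarith)) (by linarith)
    linarith

lemma digamma_hasSum' {x : ℝ} (hx : 0 < x) (hx1 : x ≤ 1) :
    HasSum (fun n : ℕ => 1 / (x + n) - 1 / (1 + n)) (-digamma x - γ) := by
  have hnn : ∀ n : ℕ, 0 ≤ 1 / (x + (n:ℝ)) - 1 / (1 + n) := by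
    intro n
    have h1 : (0:ℝ) < x + n := by positivity
    have : 1 / (1 + (n:ℝ)) ≤ 1 / (x + n) :=
      one_div_le_one_div_of_le h1 (by linarith)
    linarith
  rw [hasSum_iff_tendsto_nat_of_nonneg hnn]
  have key : ∀ N : ℕ, ∑ i ∈ Finset.range N, (1 / (x + (i:ℝ)) - 1 / (1 + i)) =
      (digamma (x + N) - digamma (1 + N)) - (digamma x + γ) := by
    intro N
    have h1 := digamma_add_nat' hx N
    have h2 := digamma_add_nat' (x := 1) one_pos N
    rw [Finset.sum_sub_distrib]
    rw [h1, h2, digamma_one']; ring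
  simp_rw [key]
  have := (digamma_diff_tendsto' hx hx1).sub_const (digamma x + γ)
  rw [zero_sub, neg_add'] at this
  exact this

/-- The shifted term sequence of the series for `ℓ(β₂(ℓ) - (1 - 1/(2ℓ))) + 1/2`. -/
noncomputable def dt (x : ℝ) (n : ℕ) : ℝ :=
  1 / ((n:ℝ) + 1 + x) - 1 / ((n:ℝ) + 2) - 2 * x ^ 2 / (((n:ℝ) + 1 + x) * ((n:ℝ) + 1 + 2 * x))

lemma beta2_hasSum' {l : ℝ} (hl : 2 ≤ l) :
    HasSum (dt (1 / l)) (l * (beta2 l - (1 - 1 / (2 * l))) + 1 / 2) := by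
  have hl0 : (0:ℝ) < l := by linarith
  have hx : (0:ℝ) < 1 / l := by positivity
  have hx1 : (1:ℝ) / l ≤ 1 := by rw [div_le_one hl0]; linarith
  have h2x : (0:ℝ) < 2 / l := by positivity
  have h2x1 : (2:ℝ) / l ≤ 1 := by rw [div_le_one hl0]; linarith
  have h1 := (digamma_hasSum' hx hx1).mul_left (1 - 2 / l)
  have h2 := (digamma_hasSum' h2x h2x1).mul_left (2 / l)
  have h3 := h1.add h2
  set S : ℝ := (1 - 2 / l) * (-digamma (1 / l) - γ) + 2 / l * (-digamma (2 / l) - γ) with hS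
  set g : ℕ → ℝ := fun n =>
    (1 - 2 / l) * (1 / (1 / l + n) - 1 / (1 + n)) + 2 / l * (1 / (2 / l + n) - 1 / (1 + n))
    with hg
  have h4 : HasSum (fun n => g (n + 1)) (S - g 0) := by
    rw [hasSum_nat_add_iff (f := g) 1]
    simpa [Finset.sum_range_one] using h3
  have hterm : ∀ n : ℕ, dt (1 / l) n = g (n + 1) := by
    intro n
    have hn0 : (0:ℝ) ≤ n := Nat.cast_nonneg n
    have hA : ((n:ℝ) + 1 + 1 / l) ≠ 0 := by positivity
    have hB : ((n:ℝ) + 1 + 2 * (1 / l)) ≠ 0 := by positivity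
    have hC : ((n:ℝ) + 2) ≠ 0 := by positivity
    have hl' : l ≠ 0 := hl0.ne'
    rw [dt, hg]
    push_cast
    field_simp
    ring
  have hval : S - g 0 = l * (beta2 l - (1 - 1 / (2 * l))) + 1 / 2 := by
    rw [hS, hg, beta2]
    have hl' : l ≠ 0 := hl0.ne'
    push_cast
    field_simp
    ring
  rw [show dt (1 / l) = fun n => g (n + 1) from funext hterm, ← hval]
  exact h4

lemma dt_nonneg' {x : ℝ} (hx : 0 < x) (hx2 : x ≤ 1 / 2) (n : ℕ) : 0 ≤ dt x n := by
  have ht : (0:ℝ) ≤ n := Nat.cast_nonneg n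
  set t : ℝ := (n:ℝ) with hdef
  have hA : (0:ℝ) < t + 1 + x := by linarith
  have hB : (0:ℝ) < t + 1 + 2 * x := by linarith
  have hC : (0:ℝ) < t + 2 := by linarith
  have key : dt x n = ((1 - x) * (t + 1 + 2 * x) - 2 * x ^ 2 * (t + 2)) /
      ((t + 1 + x) * (t + 2) * (t + 1 + 2 * x)) := by
    rw [dt]; field_simp; ring
  rw [key]
  apply div_nonneg _ (by positivity)
  nlinarith [mul_nonneg ht (by linarith : (0:ℝ) ≤ 1 - 2 * x)]

lemma dt_anti' {x y : ℝ} (hx : 0 < x) (hxy : x ≤ y) (hy : y ≤ 1 / 2) (n : ℕ) :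
    dt y n ≤ dt x n := by
  have ht : (0:ℝ) ≤ n := Nat.cast_nonneg n
  set t : ℝ := (n:ℝ) with hdef
  have hAx : (0:ℝ) < t + 1 + x := by linarith
  have hBx : (0:ℝ) < t + 1 + 2 * x := by linarith
  have hAy : (0:ℝ) < t + 1 + y := by linarith
  have hBy : (0:ℝ) < t + 1 + 2 * y := by linarith
  have h1 : 1 / (t + 1 + y) ≤ 1 / (t + 1 + x) :=
    one_div_le_one_div_of_le hAx (by linarith)
  have h2 : 2 * x ^ 2 / ((t + 1 + x) * (t + 1 + 2 * x)) ≤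
      2 * y ^ 2 / ((t + 1 + y) * (t + 1 + 2 * y)) := by
    rw [div_le_div_iff₀ (by positivity) (by positivity)]
    nlinarith [mul_nonneg (by positivity : (0:ℝ) ≤ (t + 1) ^ 2)
        (by nlinarith : (0:ℝ) ≤ y ^ 2 - x ^ 2),
      mul_nonneg (mul_nonneg (by linarith : (0:ℝ) ≤ t + 1)
        (by nlinarith : (0:ℝ) ≤ 3 * x * y)) (by linarith : (0:ℝ) ≤ y - x)]
  rw [dt, dt]
  linarith

lemma sum_dt_quarter' : (1:ℝ) / 2 ≤ ∑ n ∈ Finset.range 40, dt (1 / 4) n := by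
  simp only [dt]
  norm_num [Finset.sum_range_succ]

lemma dt_third_bound' (i : ℕ) :
    dt (1 / 3) (i + 1) ≤ 2 / 3 * (1 / ((i:ℝ) + 2) - 1 / ((i:ℝ) + 3)) := by
  have ht : (0:ℝ) ≤ i := Nat.cast_nonneg i
  set t : ℝ := (i:ℝ) with hdef
  rw [← sub_nonneg]
  have key : 2 / 3 * (1 / (t + 2) - 1 / (t + 3)) - dt (1 / 3) (i + 1) =
      (2 / 9 * t ^ 2 + 4 / 3 * t + 52 / 27) /
        ((t + 2) * (t + 3) * (t + 2 + 1 / 3) * (t + 2 + 2 / 3)) := by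
    rw [dt]
    push_cast
    have h1 : (t + 2 : ℝ) ≠ 0 := by positivity
    have h2 : (t + 3 : ℝ) ≠ 0 := by positivity
    have h3 : (t + 1 + 1 + 1 / 3 : ℝ) ≠ 0 := by positivity
    have h4 : (t + 1 + 1 + 2 * (1 / 3) : ℝ) ≠ 0 := by positivity
    field_simp
    ring
  rw [key]
  positivity

lemma sum_dt_third' (n : ℕ) : ∑ i ∈ Finset.range n, dt (1 / 3) i ≤ 29 / 60 := by
  cases n with
  | zero => norm_num
  | succ m =>
    rw [Finset.sum_range_succ']
    have h0 : dt (1 / 3) 0 = 3 / 20 := by rw [dt]; norm_num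
    have hsum : ∑ i ∈ Finset.range m, dt (1 / 3) (i + 1) ≤
        ∑ i ∈ Finset.range m, (2 / 3 * (1 / ((i:ℝ) + 2) - 1 / ((i:ℝ) + 3))) :=
      Finset.sum_le_sum fun i _ => dt_third_bound' i
    have htel : ∑ i ∈ Finset.range m, (2 / 3 * (1 / ((i:ℝ) + 2) - 1 / ((i:ℝ) + 3))) =
        -(2 / 3) * (1 / ((m:ℝ) + 2)) - -(2 / 3) * (1 / (((0:ℕ):ℝ) + 2)) := by
      rw [← Finset.sum_range_sub (fun i => -(2 / 3) * (1 / ((i:ℝ) + 2))) m]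
      refine Finset.sum_congr rfl fun i _ => ?_
      push_cast
      ring
    have hm : (0:ℝ) ≤ (m:ℝ) := Nat.cast_nonneg m
    have hpos : (0:ℝ) < (m:ℝ) + 2 := by linarith
    have : -(2 / 3) * (1 / ((m:ℝ) + 2)) ≤ 0 := by
      have : (0:ℝ) < 1 / ((m:ℝ) + 2) := by positivity
      nlinarith
    rw [h0]
    rw [htel] at hsum
    have hinv : (0:ℝ) ≤ ((m:ℝ) + 2)⁻¹ := by positivity
    norm_num at hsum ⊢
    linarith

end DigammaAux

theorem beta2_vs_alpha2 :
    (∀ ℓ : ℕ, 4 ≤ ℓ → 1 - 1 / (2 * (ℓ : ℝ)) ≤ beta2 (ℓ : ℝ)) ∧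
    beta2 (2 : ℝ) ≤ 1 - 1 / (2 * (2 : ℝ)) ∧
    beta2 (3 : ℝ) ≤ 1 - 1 / (2 * (3 : ℝ)) := by
  refine ⟨?_, ?_, ?_⟩
  · intro ℓ hℓ
    have hl : (4:ℝ) ≤ (ℓ:ℝ) := by exact_mod_cast hℓ
    have hl0 : (0:ℝ) < (ℓ:ℝ) := by linarith
    have h := beta2_hasSum' (l := (ℓ:ℝ)) (by linarith)
    have hx : (0:ℝ) < 1 / (ℓ:ℝ) := by positivity
    have hx4 : 1 / (ℓ:ℝ) ≤ 1 / 4 := by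
      rw [div_le_div_iff₀ hl0 (by norm_num)]; linarith
    have h1 : ∑ n ∈ Finset.range 40, dt (1 / 4) n ≤
        ∑ n ∈ Finset.range 40, dt (1 / (ℓ:ℝ)) n :=
      Finset.sum_le_sum fun n _ => dt_anti' hx hx4 (by norm_num) n
    have h2 : ∑ n ∈ Finset.range 40, dt (1 / (ℓ:ℝ)) n ≤
        (ℓ:ℝ) * (beta2 (ℓ:ℝ) - (1 - 1 / (2 * (ℓ:ℝ)))) + 1 / 2 := by
      have := Summable.sum_le_tsum (Finset.range 40)
        (fun n _ => dt_nonneg' hx (le_trans hx4 (by norm_num)) n) h.summable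
      rwa [h.tsum_eq] at this
    have h3 := le_trans sum_dt_quarter' (le_trans h1 h2)
    by_contra hcon
    push_neg at hcon
    have : (ℓ:ℝ) * (beta2 (ℓ:ℝ) - (1 - 1 / (2 * (ℓ:ℝ)))) < 0 :=
      mul_neg_of_pos_of_neg hl0 (by linarith)
    linarith
  · have h2 : (2:ℝ) / 2 = 1 := by norm_num
    rw [beta2, h2, digamma_one']
    norm_num
  · have h := beta2_hasSum' (l := 3) (by norm_num)
    have hle : ∑' n, dt (1 / 3) n ≤ 29 / 60 :=
      Real.tsum_le_of_sum_range_le (fun n => dt_nonneg' (by norm_num) (by norm_num) n)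
        sum_dt_third'
    rw [h.tsum_eq] at hle
    norm_num at hle ⊢
    linarith
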